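/- For all positive integers n and k, Σ_{i=1}^∞ 1/(i·(i+k)^{2n}) = H_k/k^{2n} − Σ_{i=1}^{2n−1} ζ(2n+1−i)/k^i + Σ_{i=1}^{2n−1} H_k^{(2n+1−i)}/k^i. -/

import Mathlib

open scoped BigOperators

/-- Odd harmonic number `h_k^{(n)} = ∑_{i=1}^k 1/(2i-1)^n`. -/
noncomputable def h (n k : ℕ) : ℝ := ∑ i ∈ Finset.range k, (1 : ℝ) / (2 * (i : ℝ) + 1) ^ n

/-- Generalized harmonic number `H_k^{(n)} = ∑_{i=1}^k 1/i^n`. -/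
noncomputable def H (n k : ℕ) : ℝ := ∑ i ∈ Finset.range k, (1 : ℝ) / ((i : ℝ) + 1) ^ n

/-- Riemann zeta value at a positive integer `m ≥ 2`: `ζ(m) = ∑_{n≥1} 1/n^m`. -/
noncomputable def Z (m : ℕ) : ℝ := ∑' n : ℕ+, (1 : ℝ) / ((n : ℕ) : ℝ) ^ m

lemma Z_eq (j : ℕ) : Z j = ∑' i : ℕ, (1:ℝ) / ((i:ℝ)+1) ^ j := by
  rw [Z, ← Equiv.pnatEquivNat.symm.tsum_eq]
  congr 1; ext i
  simp [Equiv.pnatEquivNat]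

lemma summable_pow (j : ℕ) (hj : 2 ≤ j) :
    Summable (fun i : ℕ => (1:ℝ) / ((i:ℝ)+1) ^ j) := by
  have := Real.summable_one_div_nat_pow.mpr hj
  rw [← summable_nat_add_iff 1] at this
  simpa using this

lemma summable_tail (k j : ℕ) (hj : 2 ≤ j) :
    Summable (fun i : ℕ => (1:ℝ) / ((i:ℝ)+1+(k:ℝ)) ^ j) := by
  have h1 := (summable_pow j hj).comp_injective (add_right_injective k)
  apply h1.congr
  intro i
  simp only [Function.comp_apply]
  push_cast
  ring_nf

lemma tsum_tail (k j : ℕ) (hj : 2 ≤ j) :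
    ∑' i : ℕ, (1:ℝ) / ((i:ℝ)+1+(k:ℝ)) ^ j = Z j - H j k := by
  have hs := summable_pow j hj
  have h0 := Summable.sum_add_tsum_nat_add k hs
  rw [Z_eq, ← h0, H]
  have h1 : ∑' (i : ℕ), (1:ℝ) / ((↑(i + k):ℝ) + 1) ^ j
      = ∑' i : ℕ, (1:ℝ) / ((i:ℝ)+1+(k:ℝ)) ^ j := by
    congr 1; ext i; push_cast; ring_nf
  rw [h1]; ring

lemma summable_main (k : ℕ) (hk : 0 < k) (m : ℕ) (hm : 1 ≤ m) :
    Summable (fun i : ℕ => (1:ℝ) / (((i:ℝ)+1) * ((i:ℝ)+1+(k:ℝ)) ^ m)) := by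
  have hkr : (0:ℝ) < (k:ℝ) := by exact_mod_cast hk
  refine Summable.of_nonneg_of_le (fun i => by positivity) (fun i => ?_) (summable_pow 2 le_rfl)
  have h1 : (0:ℝ) < (i:ℝ)+1 := by positivity
  have h3 : ((i:ℝ)+1) ≤ ((i:ℝ)+1+(k:ℝ)) ^ m := by
    calc ((i:ℝ)+1) ≤ ((i:ℝ)+1+(k:ℝ)) := by linarith
      _ = ((i:ℝ)+1+(k:ℝ)) ^ 1 := (pow_one _).symm
      _ ≤ ((i:ℝ)+1+(k:ℝ)) ^ m := pow_le_pow_right₀ (by linarith) hm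
  apply div_le_div_of_nonneg_left one_pos.le (by positivity)
  calc ((i:ℝ)+1)^2 = ((i:ℝ)+1) * ((i:ℝ)+1) := sq _
    _ ≤ ((i:ℝ)+1) * ((i:ℝ)+1+(k:ℝ)) ^ m := mul_le_mul_of_nonneg_left h3 h1.le

lemma telescope (k : ℕ) (hk : 0 < k) :
    ∑' i : ℕ, ((1:ℝ) / ((i:ℝ)+1) - (1:ℝ) / ((i:ℝ)+1+(k:ℝ))) = H 1 k := by
  set f : ℕ → ℝ := fun i => (1:ℝ) / ((i:ℝ)+1) with hf
  have hkr : (0:ℝ) < (k:ℝ) := by exact_mod_cast hk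
  have hsum : Summable (fun i : ℕ => f i - (1:ℝ)/((i:ℝ)+1+(k:ℝ))) := by
    apply ((summable_main k hk 1 le_rfl).mul_left (k:ℝ)).congr
    intro i
    have h1 : (0:ℝ) < (i:ℝ)+1 := by positivity
    simp only [hf, pow_one]
    field_simp
    ring
  have hps : ∀ N : ℕ, ∑ i ∈ Finset.range N, (f i - (1:ℝ)/((i:ℝ)+1+(k:ℝ)))
      = H 1 k - ∑ i ∈ Finset.range k, f (N + i) := by
    intro N
    have e2 : ∑ i ∈ Finset.range N, (1:ℝ)/((i:ℝ)+1+(k:ℝ))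
        = ∑ i ∈ Finset.range N, f (k + i) := by
      refine Finset.sum_congr rfl fun i _ => ?_
      simp only [hf]; push_cast; ring_nf
    have e3 : ∑ i ∈ Finset.range (k + N), f i
        = ∑ i ∈ Finset.range k, f i + ∑ i ∈ Finset.range N, f (k + i) :=
      Finset.sum_range_add f k N
    have e4 : ∑ i ∈ Finset.range (N + k), f i
        = ∑ i ∈ Finset.range N, f i + ∑ i ∈ Finset.range k, f (N + i) :=
      Finset.sum_range_add f N k
    have e5 : H 1 k = ∑ i ∈ Finset.range k, f i := by simp [H, hf]
    rw [Finset.sum_sub_distrib, e2, e5]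
    rw [(by omega : k + N = N + k)] at e3
    linarith [e3, e4]
  have hlim : Filter.Tendsto (fun N => ∑ i ∈ Finset.range N, (f i - (1:ℝ)/((i:ℝ)+1+(k:ℝ))))
      Filter.atTop (nhds (H 1 k)) := by
    simp only [hps]
    have h0 : Filter.Tendsto (fun N : ℕ => ∑ i ∈ Finset.range k, f (N + i))
        Filter.atTop (nhds 0) := by
      have h0' : Filter.Tendsto (fun N : ℕ => ∑ i ∈ Finset.range k, f (N + i))
          Filter.atTop (nhds (∑ i ∈ Finset.range k, (0:ℝ))) := by
        apply tendsto_finset_sum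
        intro i _
        have ht : Filter.Tendsto (fun N : ℕ => ((N:ℝ) + ((i:ℝ) + 1))) Filter.atTop Filter.atTop :=
          Filter.tendsto_atTop_add_const_right Filter.atTop ((i:ℝ)+1) tendsto_natCast_atTop_atTop
        apply ht.inv_tendsto_atTop.congr
        intro N
        simp only [Pi.inv_apply, hf]
        rw [one_div]
        push_cast
        ring_nf
      simpa using h0'
    have := Filter.Tendsto.sub (tendsto_const_nhds (x := H 1 k)) h0
    simpa using this
  exact tendsto_nhds_unique hsum.hasSum.tendsto_sum_nat hlim

lemma key (k : ℕ) (hk : 0 < k) : ∀ m : ℕ, 1 ≤ m →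
    ∑' i : ℕ, (1:ℝ) / (((i:ℝ)+1) * ((i:ℝ)+1+(k:ℝ)) ^ m)
      = H 1 k / (k:ℝ) ^ m
        - ∑ j ∈ Finset.Icc 2 m, (Z j - H j k) / (k:ℝ) ^ (m + 1 - j) := by
  have hkr : (0:ℝ) < (k:ℝ) := by exact_mod_cast hk
  intro m
  induction m with
  | zero => omega
  | succ m ih =>
    intro _
    rcases Nat.eq_zero_or_pos m with hm0 | hm1
    · subst hm0
      have e : ∀ i : ℕ, (1:ℝ) / (((i:ℝ)+1) * ((i:ℝ)+1+(k:ℝ)) ^ 1)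
          = (1/(k:ℝ)) * ((1:ℝ)/((i:ℝ)+1) - (1:ℝ)/((i:ℝ)+1+(k:ℝ))) := by
        intro i
        have h1 : (0:ℝ) < (i:ℝ)+1 := by positivity
        rw [pow_one]
        field_simp
        ring
      rw [tsum_congr e, tsum_mul_left, telescope k hk]
      have he : Finset.Icc 2 (0+1) = (∅ : Finset ℕ) := rfl
      rw [he]
      simp only [Finset.sum_empty, sub_zero, zero_add, pow_one]
      ring
    · have ihm := ih hm1
      have hstep : ∀ i : ℕ, (1:ℝ) / (((i:ℝ)+1) * ((i:ℝ)+1+(k:ℝ)) ^ (m+1))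
          = (1/(k:ℝ)) * ((1:ℝ) / (((i:ℝ)+1) * ((i:ℝ)+1+(k:ℝ)) ^ m)
              - (1:ℝ)/((i:ℝ)+1+(k:ℝ)) ^ (m+1)) := by
        intro i
        have h1 : (0:ℝ) < (i:ℝ)+1 := by positivity
        have h2 : (0:ℝ) < (i:ℝ)+1+(k:ℝ) := by positivity
        have h3 : (0:ℝ) < ((i:ℝ)+1+(k:ℝ))^m := by positivity
        field_simp
        ring
      rw [tsum_congr hstep, tsum_mul_left,
        Summable.tsum_sub (summable_main k hk m hm1) (summable_tail k (m+1) (by omega)),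
        ihm, tsum_tail k (m+1) (by omega)]
      rw [Finset.sum_Icc_succ_top (by omega : 2 ≤ m + 1)]
      have hre : ∑ j ∈ Finset.Icc 2 m, (Z j - H j k) / (k:ℝ) ^ (m + 1 + 1 - j)
          = ∑ j ∈ Finset.Icc 2 m, ((Z j - H j k) / (k:ℝ) ^ (m + 1 - j)) / (k:ℝ) := by
        refine Finset.sum_congr rfl fun j hj => ?_
        rw [Finset.mem_Icc] at hj
        rw [(by omega : m + 1 + 1 - j = (m + 1 - j) + 1), pow_succ, div_div]
      rw [hre, (by omega : m + 1 + 1 - (m+1) = 1), pow_one, ← Finset.sum_div, pow_succ]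
      field_simp
      ring

theorem stmt10 (n k : ℕ+) :
    (∑' i : ℕ+, (1 : ℝ) / (((i : ℕ) : ℝ) * (((i : ℕ) : ℝ) + ((k : ℕ) : ℝ)) ^ (2 * (n : ℕ))))
      = H 1 (k : ℕ) / ((k : ℕ) : ℝ) ^ (2 * (n : ℕ))
        - (∑ i ∈ Finset.Icc 1 (2 * (n : ℕ) - 1), Z (2 * (n : ℕ) + 1 - i) / ((k : ℕ) : ℝ) ^ i)
        + ∑ i ∈ Finset.Icc 1 (2 * (n : ℕ) - 1), H (2 * (n : ℕ) + 1 - i) (k : ℕ) / ((k : ℕ) : ℝ) ^ i := by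
  set m := 2 * (n : ℕ) with hm
  have hm1 : 1 ≤ m := by have := n.pos; omega
  have hk : 0 < (k : ℕ) := k.pos
  have h1 : (∑' i : ℕ+, (1 : ℝ) / (((i : ℕ) : ℝ) * (((i : ℕ) : ℝ) + ((k : ℕ) : ℝ)) ^ m))
      = ∑' i : ℕ, (1:ℝ) / (((i:ℝ)+1) * ((i:ℝ)+1+((k:ℕ):ℝ)) ^ m) := by
    rw [← Equiv.pnatEquivNat.symm.tsum_eq]
    congr 1; ext i
    simp [Equiv.pnatEquivNat]
  rw [h1, key (k:ℕ) hk m hm1]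
  have h2 : ∑ j ∈ Finset.Icc 2 m, (Z j - H j (k:ℕ)) / ((k:ℕ):ℝ) ^ (m + 1 - j)
      = ∑ i ∈ Finset.Icc 1 (m - 1), (Z (m + 1 - i) - H (m + 1 - i) (k:ℕ)) / ((k:ℕ):ℝ) ^ i := by
    refine Finset.sum_nbij' (fun j => m + 1 - j) (fun i => m + 1 - i) ?_ ?_ ?_ ?_ ?_
    · intro a ha; simp only [Finset.mem_Icc] at ha ⊢; omega
    · intro a ha; simp only [Finset.mem_Icc] at ha ⊢; omega
    · intro a ha; simp only [Finset.mem_Icc] at ha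
      show m + 1 - (m + 1 - a) = a; omega
    · intro a ha; simp only [Finset.mem_Icc] at ha
      show m + 1 - (m + 1 - a) = a; omega
    · intro a ha; simp only [Finset.mem_Icc] at ha
      show _ = (Z (m + 1 - (m+1-a)) - H (m + 1 - (m+1-a)) (k:ℕ)) / ((k:ℕ):ℝ) ^ (m+1-a)
      rw [(by omega : m + 1 - (m + 1 - a) = a)]
  rw [h2]
  simp only [sub_div]
  rw [Finset.sum_sub_distrib]
  ring
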